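/- Let μ, γ be real numbers with 1 < μ ≤ 2 and 1 < γ < 2, and set a = 1 − 1/γ (the nontrivial fixed point of f_γ) and b = μ/(1+μ) (the nontrivial fixed point of T_μ). Then the two conditions T_μ(a) = b and f_γ(b) = a hold if and only if γ = (1+μ)/μ. In particular, when γ = (1+μ)/μ the two-element set {1/(1+μ), μ/(1+μ)} is an invariant set of the IFS {f_γ, T_μ}: f_γ(Λ) ∪ T_μ(Λ) = Λ. This is condition (C′2) for a 2-point toss-and-catch of the logistic-tent IFS. -/

import Mathlib

/-- The logistic map `f_γ(x) = γ·x·(1−x)`. -/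
def logistic (γ x : ℝ) : ℝ := γ * x * (1 - x)

/-- The tent map `T_μ(x) = μ·x` for `x < 1/2` and `T_μ(x) = μ·(1−x)` for `x ≥ 1/2`. -/
noncomputable def tent (μ x : ℝ) : ℝ := if x < 1 / 2 then μ * x else μ * (1 - x)

/-- Condition (C′2) for a 2-point toss-and-catch of the logistic-tent IFS:
for `1 < μ ≤ 2` and `1 < γ < 2`, with `a = 1 − 1/γ` and `b = μ/(1+μ)`, the conditions
`T_μ(a) = b` and `f_γ(b) = a` hold iff `γ = (1+μ)/μ`; and when `γ = (1+μ)/μ` the set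
`Λ = {1/(1+μ), μ/(1+μ)}` is an invariant set of the IFS `{f_γ, T_μ}`. -/
theorem logistic_tent_IFS_two_point_toss_and_catch (μ γ : ℝ)
    (hμ1 : 1 < μ) (hμ2 : μ ≤ 2) (hγ1 : 1 < γ) (hγ2 : γ < 2)
    (a b : ℝ) (ha : a = 1 - 1 / γ) (hb : b = μ / (1 + μ)) :
    ((tent μ a = b ∧ logistic γ b = a) ↔ γ = (1 + μ) / μ) ∧
    (γ = (1 + μ) / μ →
      logistic γ '' ({1 / (1 + μ), μ / (1 + μ)} : Set ℝ) ∪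
        tent μ '' ({1 / (1 + μ), μ / (1 + μ)} : Set ℝ)
          = ({1 / (1 + μ), μ / (1 + μ)} : Set ℝ)) := by
  have hμ0 : (0:ℝ) < μ := by linarith
  have h1μ : (0:ℝ) < 1 + μ := by linarith
  have hμne : μ ≠ 0 := ne_of_gt hμ0
  have h1μne : (1:ℝ) + μ ≠ 0 := ne_of_gt h1μ
  have hγ0 : (0:ℝ) < γ := by linarith
  have hγne : γ ≠ 0 := ne_of_gt hγ0
  have haγ : a < 1 / 2 := by
    rw [ha]
    have : (1:ℝ)/2 < 1/γ := by
      rw [div_lt_div_iff₀ (by norm_num) hγ0]; linarith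
    linarith
  have htenta : tent μ a = μ * a := if_pos haγ
  constructor
  · constructor
    · rintro ⟨h1, _⟩
      rw [htenta, ha, hb] at h1
      field_simp at h1
      rw [eq_div_iff hμne]
      nlinarith
    · intro hγeq
      subst hγeq
      constructor
      · rw [htenta, ha, hb]
        field_simp; ring
      · rw [logistic, ha, hb]
        field_simp
  · intro hγeq
    subst hγeq
    have hbge : ¬ (μ / (1 + μ) < 1 / 2) := by
      push_neg
      rw [div_le_div_iff₀ (by norm_num) h1μ]; linarith
    have hplt : (1:ℝ) / (1 + μ) < 1 / 2 := by
      rw [div_lt_div_iff₀ h1μ (by norm_num)]; linarith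
    have hlp : logistic ((1 + μ)/μ) (1 / (1 + μ)) = 1 / (1 + μ) := by
      rw [logistic]; field_simp; ring
    have hlq : logistic ((1 + μ)/μ) (μ / (1 + μ)) = 1 / (1 + μ) := by
      rw [logistic]; field_simp; ring
    have htp : tent μ (1 / (1 + μ)) = μ / (1 + μ) := by
      rw [tent, if_pos hplt]; field_simp
    have htq : tent μ (μ / (1 + μ)) = μ / (1 + μ) := by
      rw [tent, if_neg hbge]; field_simp; ring
    ext x
    simp only [Set.image_insert_eq, Set.image_singleton, Set.mem_union,
      Set.mem_insert_iff, Set.mem_singleton_iff, hlp, hlq, htp, htq]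
    tauto
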